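/- Let M ⊆ M₀ be a finite, nonempty, simple and bound set with M̃ ≠ ∅. Then there exists a connected component K of {x : U(x) ≤ Θ(M, M̃)} such that M ⊆ K and K ∩ M̃ ≠ ∅; moreover at least two distinct connected components of {x : U(x) < Θ(M, M̃)} intersect K. -/

import Mathlib

open Set Filter Metric
open scoped RealInnerProductSpace

noncomputable section

/-- Euclidean space `ℝ^d`. -/
abbrev Eucl (d : ℕ) : Type := EuclideanSpace ℝ (Fin d)

/-- The communication height `Θ(x, y)` between two points. -/
def commHeight {d : ℕ} (U : Eucl d → ℝ) (x y : Eucl d) : ℝ :=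
  ⨅ γ : Path x y, ⨆ t : unitInterval, U (γ t)

/-- The communication height `Θ(A, B)` between two sets, `+∞` if one is empty. -/
def commHeightSet {d : ℕ} (U : Eucl d → ℝ) (A B : Set (Eucl d)) : EReal :=
  ⨅ x ∈ A, ⨅ y ∈ B, (commHeight U x y : EReal)

/-- `M̃`: the local minima of `U` outside `M` of height at most `c = U(M)`. -/
def tildeSet {d : ℕ} (U : Eucl d → ℝ) (M : Set (Eucl d)) (c : ℝ) : Set (Eucl d) :=
  {m' | IsLocalMin U m' ∧ m' ∉ M ∧ U m' ≤ c}

/-- `Ξ(M) = Θ(M, M̃) − U(M) ∈ (0, ∞]`. -/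
def XiSet {d : ℕ} (U : Eucl d → ℝ) (M : Set (Eucl d)) (c : ℝ) : EReal :=
  commHeightSet U M (tildeSet U M c) - (c : EReal)

/-- `M` (simple, common value `c`) is bound. -/
def IsBound {d : ℕ} (U : Eucl d → ℝ) (M : Set (Eucl d)) (c : ℝ) : Prop :=
  (∃ m, M = {m}) ∨
    ∀ m ∈ M, ∀ m' ∈ M, (commHeight U m m' : EReal) < commHeightSet U M (tildeSet U M c)

/-- `A` is a connected component of `S`. -/
def IsCompOf {d : ℕ} (S A : Set (Eucl d)) : Prop :=
  ∃ x ∈ S, A = connectedComponentIn S x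

/-- The Hessian matrix of `U` at `x`. -/
def hessMat {d : ℕ} (U : Eucl d → ℝ) (x : Eucl d) : Matrix (Fin d) (Fin d) ℝ :=
  Matrix.of fun i j =>
    iteratedFDeriv ℝ 2 U x ![EuclideanSpace.single i (1 : ℝ), EuclideanSpace.single j (1 : ℝ)]

/-- `σ` is a saddle point of `U`. -/
def IsSaddle {d : ℕ} (U : Eucl d → ℝ) (σ : Eucl d) : Prop :=
  gradient U σ = 0 ∧
    ∃ hH : (hessMat U σ).IsHermitian,
      IsUnit (hessMat U σ).det ∧ ∃! i, hH.eigenvalues i < 0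

/-- `x ↷ y` : heteroclinic orbit of `ẋ = b(x)` from `x` to `y`. -/
def Hetero {d : ℕ} (b : Eucl d → Eucl d) (x y : Eucl d) : Prop :=
  ∃ φ : ℝ → Eucl d,
    (∀ t, HasDerivAt φ (b (φ t)) t) ∧
      Tendsto φ atBot (nhds x) ∧ Tendsto φ atTop (nhds y)

/-- `σ ↝ m`. -/
def ConnectsTo {d : ℕ} (U : Eucl d → ℝ) (b : Eucl d → Eucl d) (σ m : Eucl d) : Prop :=
  Hetero b σ m ∨
    ∃ (k : ℕ) (_ : 0 < k) (σs : Fin k → Eucl d) (ms : Fin (k + 1) → Eucl d),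
      (∀ i, IsSaddle U (σs i)) ∧ (∀ i, U (σs i) < U σ) ∧
        (∀ i : Fin k, IsLocalMin U (ms i.castSucc)) ∧
        ms (Fin.last k) = m ∧ Hetero b σ (ms 0) ∧
        ∀ i : Fin k, Hetero b (σs i) (ms i.castSucc) ∧ Hetero b (σs i) (ms i.succ)

/-- `σ ↝ M`. -/
def ConnectsToSet {d : ℕ} (U : Eucl d → ℝ) (b : Eucl d → Eucl d) (σ : Eucl d)
    (M : Set (Eucl d)) : Prop :=
  ∃ m ∈ M, ConnectsTo U b σ m

/-- `σ ↷ M`. -/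
def HeteroToSet {d : ℕ} (b : Eucl d → Eucl d) (σ : Eucl d) (M : Set (Eucl d)) : Prop :=
  ∃ m ∈ M, Hetero b σ m

/-- `M →_σ M'`. -/
def AdjacentVia {d : ℕ} (U : Eucl d → ℝ) (b : Eucl d → Eucl d) (M M' : Set (Eucl d))
    (c : ℝ) (σ : Eucl d) : Prop :=
  IsSaddle U σ ∧ ConnectsToSet U b σ M ∧ HeteroToSet b σ M' ∧
    (U σ : EReal) = commHeightSet U M (tildeSet U M c) ∧
    (U σ : EReal) = commHeightSet U M M'

/-- Unstable-manifold property. -/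
def UnstableManifoldProperty {d : ℕ} (U : Eucl d → ℝ) (b : Eucl d → Eucl d) : Prop :=
  ∀ σ : Eucl d, IsSaddle U σ →
    ∃ r' > (0 : ℝ), ∃ Ap Am : Set (Eucl d),
      Ap ≠ Am ∧
      IsCompOf (ball σ r' ∩ {x | U x < U σ}) Ap ∧
      IsCompOf (ball σ r' ∩ {x | U x < U σ}) Am ∧
      (∀ C, IsCompOf (ball σ r' ∩ {x | U x < U σ}) C → C = Ap ∨ C = Am) ∧
      ∃ mp mm : Eucl d, IsLocalMin U mp ∧ IsLocalMin U mm ∧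
        ∃ tp tm : ℝ, ∃ φp φm : ℝ → Eucl d,
          (∀ t, HasDerivAt φp (b (φp t)) t) ∧ (∀ t, HasDerivAt φm (b (φm t)) t) ∧
          Tendsto φp atBot (nhds σ) ∧ Tendsto φp atTop (nhds mp) ∧
          Tendsto φm atBot (nhds σ) ∧ Tendsto φm atTop (nhds mm) ∧
          φp '' Iic tp ⊆ Ap ∧ φm '' Iic tm ⊆ Am

namespace Aux
variable {d : ℕ} {U : Eucl d → ℝ} {x y : Eucl d}

lemma grad_zero (h : IsLocalMin U x) : gradient U x = 0 := by
  unfold gradient; rw [h.fderiv_eq_zero]; simp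

lemma le_pathSup (hU : Continuous U) (γ : Path x y) (t : unitInterval) :
    U (γ t) ≤ ⨆ s : unitInterval, U (γ s) :=
  le_ciSup (isCompact_range (hU.comp γ.continuous)).bddAbove t

lemma commHeight_le (hU : Continuous U) (γ : Path x y) :
    commHeight U x y ≤ ⨆ t : unitInterval, U (γ t) := by
  refine ciInf_le ⟨U x, ?_⟩ γ
  rintro v ⟨γ', rfl⟩
  have := le_pathSup hU γ' 0
  rwa [γ'.source] at this

lemma exists_path_lt (hU : Continuous U) {a : ℝ} (h : commHeight U x y < a) :
    ∃ γ : Path x y, ∀ t : unitInterval, U (γ t) < a := by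
  have : Nonempty (Path x y) := ⟨PathConnectedSpace.somePath x y⟩
  obtain ⟨γ, hγ⟩ := exists_lt_of_ciInf_lt h
  exact ⟨γ, fun t => lt_of_le_of_lt (le_pathSup hU γ t) hγ⟩

lemma commHeight_lt (hU : Continuous U) {a : ℝ} (γ : Path x y)
    (h : ∀ t : unitInterval, U (γ t) < a) : commHeight U x y < a := by
  have hc : IsCompact (range fun t : unitInterval => U (γ t)) :=
    isCompact_range (hU.comp γ.continuous)
  obtain ⟨t, ht⟩ := hc.sSup_mem (range_nonempty _)
  calc commHeight U x y ≤ ⨆ t : unitInterval, U (γ t) := commHeight_le hU γ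
    _ = U (γ t) := ht.symm
    _ < a := h t

lemma mem_ccIn {S : Set (Eucl d)} (γ : Path x y) (h : ∀ t : unitInterval, γ t ∈ S) :
    y ∈ connectedComponentIn S x := by
  have hconn : IsPreconnected (range γ) := (isConnected_range γ.continuous).isPreconnected
  have hx : x ∈ range γ := ⟨0, γ.source⟩
  have hsub : range γ ⊆ S := by rintro _ ⟨t, rfl⟩; exact h t
  exact hconn.subset_connectedComponentIn hx hsub ⟨1, γ.target⟩

lemma sublevel_compact (hU : Continuous U)
    (hcoer : Tendsto U (cocompact (Eucl d)) atTop) (b : ℝ) :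
    IsCompact {x : Eucl d | U x ≤ b} := by
  obtain ⟨K, hK, hKs⟩ := mem_cocompact.mp (hcoer (Ici_mem_atTop (b + 1)))
  refine hK.of_isClosed_subset (isClosed_le hU continuous_const) ?_
  intro x hx
  by_contra hxK
  have := hKs hxK
  simp only [mem_preimage, mem_Ici] at this
  simp only [mem_setOf_eq] at hx
  linarith

lemma key (hU : Continuous U) (hcoer : Tendsto U (cocompact (Eucl d)) atTop) {θ : ℝ}
    (hx : U x ≤ θ) (hy : U y ≤ θ) (hch : commHeight U x y ≤ θ) :
    y ∈ connectedComponentIn {z : Eucl d | U z ≤ θ} x := by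
  set S : Set (Eucl d) := {z : Eucl d | U z ≤ θ} with hS
  by_contra hns
  have hSc : IsCompact S := sublevel_compact hU hcoer θ
  have : CompactSpace S := isCompact_iff_compactSpace.mp hSc
  have hxy' : (⟨y, hy⟩ : S) ∉ connectedComponent (⟨x, hx⟩ : S) := by
    intro h
    exact hns (by rw [connectedComponentIn_eq_image (show x ∈ S from hx)]; exact ⟨_, h, rfl⟩)
  rw [connectedComponent_eq_iInter_isClopen, mem_iInter] at hxy'
  push_neg at hxy'
  obtain ⟨⟨Z, hZcl, hxZ⟩, hyZ⟩ := hxy'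
  set A : Set (Eucl d) := (↑) '' Z with hA
  set B : Set (Eucl d) := (↑) '' Zᶜ with hB
  have hAc : IsCompact A := (hZcl.isClosed.isCompact).image continuous_subtype_val
  have hBc : IsCompact B := (hZcl.compl.isClosed.isCompact).image continuous_subtype_val
  have hdisj : Disjoint A B :=
    (Set.disjoint_image_iff Subtype.val_injective).mpr disjoint_compl_right
  have hunion : A ∪ B = S := by
    rw [hA, hB, ← image_union, union_compl_self, image_univ, Subtype.range_coe]
  obtain ⟨u, v, hu, hv, hAu, hBv, huv⟩ := SeparatedNhds.of_isCompact_isCompact hAc hBc hdisj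
  have hScover : S ⊆ u ∪ v := by
    rw [← hunion]; exact union_subset_union hAu hBv
  set F : Set (Eucl d) := {z : Eucl d | U z ≤ θ + 1} \ (u ∪ v) with hF
  have hFc : IsCompact F := (sublevel_compact hU hcoer (θ + 1)).diff (hu.union hv)
  have hFgt : ∀ z ∈ F, θ < U z := by
    intro z hz
    by_contra h
    push_neg at h
    exact hz.2 (hScover h)
  have hcov : ∃ ε > (0:ℝ), ∀ z, U z < θ + ε → z ∈ u ∪ v := by
    rcases F.eq_empty_or_nonempty with hFe | hFne
    · refine ⟨1, one_pos, fun z hz => ?_⟩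
      by_contra hzn
      have : z ∈ F := ⟨le_of_lt hz, hzn⟩
      rw [hFe] at this; exact this
    · obtain ⟨z₀, hz₀, hmin⟩ := hFc.exists_isMinOn hFne hU.continuousOn
      refine ⟨U z₀ - θ, by linarith [hFgt z₀ hz₀], fun z hz => ?_⟩
      by_contra hzn
      have hz₀le : U z₀ ≤ θ + 1 := hz₀.1
      have : z ∈ F := ⟨by show U z ≤ θ + 1; linarith, hzn⟩
      have := isMinOn_iff.mp hmin z this
      linarith
  obtain ⟨ε, hε, hcov⟩ := hcov
  obtain ⟨γ, hγ⟩ := exists_path_lt hU (lt_of_le_of_lt hch (lt_add_of_pos_right θ hε))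
  have hrange : range γ ⊆ u ∪ v := by
    rintro _ ⟨t, rfl⟩; exact hcov _ (hγ t)
  have hpre : IsPreconnected (range γ) := (isConnected_range γ.continuous).isPreconnected
  have hxu : x ∈ u := hAu ⟨⟨x, hx⟩, hxZ, rfl⟩
  have hyv : y ∈ v := hBv ⟨⟨y, hy⟩, hyZ, rfl⟩
  obtain ⟨w, hw⟩ := hpre u v hu hv hrange ⟨x, ⟨0, γ.source⟩, hxu⟩ ⟨y, ⟨1, γ.target⟩, hyv⟩
  exact (huv.ne_of_mem hw.2.1 hw.2.2) rfl

end Aux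

theorem statement13 {d : ℕ} (hd : 1 ≤ d)
    (U : Eucl d → ℝ) (hU : ContDiff ℝ (⊤ : ℕ∞) U)
    (hcoer : Tendsto U (cocompact (Eucl d)) atTop)
    (hcritfin : {x : Eucl d | gradient U x = 0}.Finite)
    (hmorse : ∀ x : Eucl d, gradient U x = 0 → IsUnit (hessMat U x).det)
    (M : Set (Eucl d)) (hMfin : M.Finite) (hMne : M.Nonempty)
    (hMloc : ∀ m ∈ M, IsLocalMin U m)
    (c : ℝ) (hc : ∀ m ∈ M, U m = c) (hMbd : IsBound U M c)
    (htilde : (tildeSet U M c).Nonempty)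
    (θ : ℝ) (hθ : (θ : EReal) = commHeightSet U M (tildeSet U M c)) :
    ∃ K : Set (Eucl d), IsCompOf {x | U x ≤ θ} K ∧ M ⊆ K ∧
      (K ∩ tildeSet U M c).Nonempty ∧
      ∃ W W' : Set (Eucl d), IsCompOf {x | U x < θ} W ∧ IsCompOf {x | U x < θ} W' ∧
        W ≠ W' ∧ (W ∩ K).Nonempty ∧ (W' ∩ K).Nonempty := by
  have hUc : Continuous U := hU.continuous
  have htfin : (tildeSet U M c).Finite :=
    hcritfin.subset (fun z hz => Aux.grad_zero hz.1)
  -- the infimum over the finite sets `M`, `M̃` is attained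
  have hattain : ∃ a ∈ M, ∃ b ∈ tildeSet U M c,
      commHeightSet U M (tildeSet U M c) = (commHeight U a b : EReal) := by
    set f : Eucl d → Eucl d → EReal := fun a b => (commHeight U a b : EReal) with hf
    have hVfin : (Set.image2 f M (tildeSet U M c)).Finite := hMfin.image2 f htfin
    have hVne : (Set.image2 f M (tildeSet U M c)).Nonempty := hMne.image2 htilde
    have heq : commHeightSet U M (tildeSet U M c) = sInf (Set.image2 f M (tildeSet U M c)) := by
      apply le_antisymm
      · refine le_sInf ?_
        rintro v ⟨a, ha, b, hb, rfl⟩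
        exact iInf₂_le_of_le a ha (iInf₂_le b hb)
      · exact le_iInf₂ fun a ha => le_iInf₂ fun b hb => sInf_le (mem_image2_of_mem ha hb)
    obtain ⟨a, ha, b, hb, hfab⟩ := hVne.csInf_mem hVfin
    exact ⟨a, ha, b, hb, by rw [heq, ← hfab]⟩
  obtain ⟨m₀, hm₀M, m₀', hm₀'t, hattain⟩ := hattain
  have hθch : θ = commHeight U m₀ m₀' := by
    have := hθ.trans hattain
    exact_mod_cast this
  have hUm₀ : U m₀ = c := hc m₀ hm₀M
  -- a small ball around `m₀` on which `m₀` is the only critical point and `U ≥ c`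
  obtain ⟨r2, hr2, h2⟩ :=
    Metric.eventually_nhds_iff.mp ((hMloc m₀ hm₀M) : ∀ᶠ z in nhds m₀, U m₀ ≤ U z)
  have hCfin : ({x : Eucl d | gradient U x = 0} \ {m₀}).Finite := hcritfin.diff
  have hm₀C : m₀ ∈ ({x : Eucl d | gradient U x = 0} \ {m₀})ᶜ := fun h => h.2 rfl
  obtain ⟨r1, hr1, hb1⟩ := Metric.isOpen_iff.mp hCfin.isClosed.isOpen_compl m₀ hm₀C
  set r := min r1 r2 with hrdef
  have hr : 0 < r := lt_min hr1 hr2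
  have hiso : ∀ z ∈ ball m₀ r, gradient U z = 0 → z = m₀ := by
    intro z hz hg
    have := hb1 (ball_subset_ball (min_le_left _ _) hz)
    by_contra hne
    exact this ⟨hg, hne⟩
  have hmin : ∀ z ∈ ball m₀ r, c ≤ U z := by
    intro z hz
    have : dist z m₀ < r2 := lt_of_lt_of_le (mem_ball.mp hz) (min_le_right _ _)
    rw [← hUm₀]; exact h2 this
  have hstrict : ∀ z ∈ ball m₀ r, z ≠ m₀ → c < U z := by
    intro z hz hne
    rcases lt_or_eq_of_le (hmin z hz) with h | h
    · exact h
    · exfalso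
      have hlm : IsLocalMin U z := by
        refine Filter.eventually_of_mem (isOpen_ball.mem_nhds hz) ?_
        intro w hw
        rw [← h]; exact hmin w hw
      exact hne (hiso z hz (Aux.grad_zero hlm))
  -- the sphere of radius `r/2` around `m₀`, on which `U` has a minimum `> c`
  have hrhalf : 0 < r / 2 := by positivity
  set p : Eucl d := m₀ + (r / 2) • EuclideanSpace.single (⟨0, hd⟩ : Fin d) (1 : ℝ) with hp
  have hpd : dist p m₀ = r / 2 := by
    rw [hp, dist_eq_norm, add_sub_cancel_left, norm_smul, EuclideanSpace.norm_single]
    simp [Real.norm_eq_abs]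
    exact hr.le
  obtain ⟨z₁, hz₁, hminOn⟩ :=
    (isCompact_sphere m₀ (r / 2)).exists_isMinOn ⟨p, hpd⟩ hUc.continuousOn
  have hz₁d : dist z₁ m₀ = r / 2 := hz₁
  have hz₁ball : z₁ ∈ ball m₀ r := by rw [mem_ball, hz₁d]; linarith
  have hz₁ne : z₁ ≠ m₀ := by
    intro h
    rw [h, dist_self] at hz₁d
    linarith
  have hδ : c < U z₁ := hstrict z₁ hz₁ball hz₁ne
  have hm₀'crit : gradient U m₀' = 0 := Aux.grad_zero hm₀'t.1
  have hm₀'ne : m₀' ≠ m₀ := fun h => hm₀'t.2.1 (h ▸ hm₀M)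
  have hfar : m₀' ∉ ball m₀ r := fun h => hm₀'ne (hiso m₀' h hm₀'crit)
  have hfar' : r / 2 ≤ dist m₀' m₀ := by
    rw [mem_ball, not_lt] at hfar; linarith
  have hθδ : U z₁ ≤ θ := by
    rw [hθch]
    have : Nonempty (Path m₀ m₀') := ⟨PathConnectedSpace.somePath _ _⟩
    refine le_ciInf fun γ => ?_
    have hIVT := intermediate_value_univ (0 : unitInterval) 1
      (f := fun t : unitInterval => dist (γ t) m₀) (γ.continuous.dist continuous_const)
    have h0 : dist (γ 0) m₀ = 0 := by rw [γ.source, dist_self]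
    have h1 : r / 2 ≤ dist (γ 1) m₀ := by rw [γ.target]; exact hfar'
    have hmem : r / 2 ∈ Icc (dist (γ 0) m₀) (dist (γ 1) m₀) :=
      ⟨by rw [h0]; exact le_of_lt hrhalf, h1⟩
    obtain ⟨t, ht⟩ := hIVT hmem
    have hts : γ t ∈ sphere m₀ (r / 2) := ht
    exact le_trans (isMinOn_iff.mp hminOn _ hts) (Aux.le_pathSup hUc γ t)
  have hcθ : c < θ := lt_of_lt_of_le hδ hθδ
  -- the component `K` of the closed sublevel set
  set S : Set (Eucl d) := {x | U x ≤ θ} with hSdef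
  have hm₀S : m₀ ∈ S := by
    simp only [hSdef, mem_setOf_eq, hUm₀]
    exact le_of_lt hcθ
  have hm₀'S : m₀' ∈ S := le_trans hm₀'t.2.2 (le_of_lt hcθ)
  set K := connectedComponentIn S m₀ with hK
  have hMK : M ⊆ K := by
    intro m'' hm''
    rcases hMbd with ⟨m, hMeq⟩ | hbd
    · have h1 : m'' = m₀ := by
        rw [hMeq, mem_singleton_iff] at hm'' hm₀M
        rw [hm'', hm₀M]
      rw [h1]; exact mem_connectedComponentIn hm₀S
    · have h := hbd m₀ hm₀M m'' hm''
      rw [← hθ] at h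
      have hlt : commHeight U m₀ m'' < θ := by exact_mod_cast h
      obtain ⟨γ, hγ⟩ := Aux.exists_path_lt hUc hlt
      exact Aux.mem_ccIn γ (fun t => le_of_lt (hγ t))
  have hm₀'K : m₀' ∈ K := Aux.key hUc hcoer hm₀S hm₀'S (le_of_eq hθch.symm)
  -- two components of the open sublevel set
  set So : Set (Eucl d) := {x | U x < θ} with hSo
  have hoSo : IsOpen So := isOpen_lt hUc continuous_const
  have hm₀So : m₀ ∈ So := by
    simp only [hSo, mem_setOf_eq, hUm₀]
    exact hcθ
  have hm₀'So : m₀' ∈ So := lt_of_le_of_lt hm₀'t.2.2 hcθ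
  set W := connectedComponentIn So m₀ with hW
  set W' := connectedComponentIn So m₀' with hW'
  have hWW' : W ≠ W' := by
    intro heq
    have hm₀'W : m₀' ∈ W := heq ▸ mem_connectedComponentIn hm₀'So
    have hWopen : IsOpen W := hoSo.connectedComponentIn
    have hWconn : IsConnected W := isConnected_connectedComponentIn_iff.mpr hm₀So
    have hWpc : IsPathConnected W := hWopen.isConnected_iff_isPathConnected.mp hWconn
    obtain ⟨γ, hγ⟩ := hWpc.joinedIn m₀ (mem_connectedComponentIn hm₀So) m₀' hm₀'W
    have h2 := Aux.commHeight_lt hUc γ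
      (fun t => (connectedComponentIn_subset So m₀ (hγ t) : U (γ t) < θ))
    rw [← hθch] at h2
    exact lt_irrefl θ h2
  exact ⟨K, ⟨m₀, hm₀S, rfl⟩, hMK, ⟨m₀', hm₀'K, hm₀'t⟩, W, W',
    ⟨m₀, hm₀So, rfl⟩, ⟨m₀', hm₀'So, rfl⟩, hWW',
    ⟨m₀, mem_connectedComponentIn hm₀So, hMK hm₀M⟩,
    ⟨m₀', mem_connectedComponentIn hm₀'So, hm₀'K⟩⟩

end
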